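/- Let P be a rooted forest of size n. Then Σ_{π ∈ L(P)} Z_P w(π) = 1, where w(π) = ∏_{i=1}^n (x_1 + ⋯ + x_i)/(x_{π_1} + ⋯ + x_{π_i}) and Z_P = ∏_{i=1}^n x_{≼i} / (x_1 + ⋯ + x_i), with x_{≼i} = Σ_{j ≼ i} x_j. -/

import Mathlib

open scoped Classical

/-- A partial order on `Fin n`, given as a plain structure (so that the standard
linear order on `Fin n` is unaffected). -/
structure FinPoset (n : ℕ) where
  le : Fin n → Fin n → Prop
  le_refl : ∀ a, le a a
  le_trans : ∀ a b c, le a b → le b c → le a c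
  le_antisymm : ∀ a b, le a b → le b a → a = b

/-- The strict order associated to a `FinPoset`. -/
def FinPoset.lt {n : ℕ} (P : FinPoset n) (a b : Fin n) : Prop :=
  P.le a b ∧ a ≠ b

variable {n : ℕ}

/-- `tauOp P i π` is the operator `τ_i` (0-indexed) acting on the permutation `π`
(in one-line notation `π k` is the entry at position `k`): it swaps the entries at
positions `i` and `i+1` if they are incomparable in `P`, else fixes `π`. -/
noncomputable def tauOp (P : FinPoset n) (i : ℕ) (π : Equiv.Perm (Fin n)) :
    Equiv.Perm (Fin n) :=
  if h : i + 1 < n then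
    if ¬ P.le (π ⟨i, Nat.lt_of_succ_lt h⟩) (π ⟨i + 1, h⟩) ∧
        ¬ P.le (π ⟨i + 1, h⟩) (π ⟨i, Nat.lt_of_succ_lt h⟩) then
      π * Equiv.swap ⟨i, Nat.lt_of_succ_lt h⟩ ⟨i + 1, h⟩
    else π
  else π

/-- `π` is a linear extension of the poset `P` on `Fin n`: if `a ≺ b` in `P`
then the position of `a` precedes the position of `b`. -/
def IsLinearExtension (P : FinPoset n) (π : Equiv.Perm (Fin n)) : Prop :=
  ∀ a b : Fin n, P.lt a b → π.symm a < π.symm b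

/-- The extended promotion operator `∂_j = τ_j τ_{j+1} ⋯ τ_{n-2}` (0-indexed),
applied on the right to `π`. -/
noncomputable def promoOp (P : FinPoset n) (j : ℕ) (π : Equiv.Perm (Fin n)) :
    Equiv.Perm (Fin n) :=
  (List.range (n - 1 - j)).foldl (fun σ k => tauOp P (j + k) σ) π

/-- `y` covers `x` in `P`. -/
def IsCover (P : FinPoset n) (x y : Fin n) : Prop :=
  P.lt x y ∧ ∀ z : Fin n, P.lt x z → P.lt z y → False

/-- `P` is a rooted forest: every element has at most one successor (cover above). -/
def IsRootedForest (P : FinPoset n) : Prop :=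
  ∀ x y z : Fin n, IsCover P x y → IsCover P x z → y = z

namespace Aux

def IsMax (P : FinPoset n) (m : Fin n) : Prop := ∀ b, ¬ P.lt m b

lemma card_le_mono (P : FinPoset n) {a b : Fin n} (h : P.lt a b) :
    (Finset.univ.filter (fun j => P.le j a)).card
      < (Finset.univ.filter (fun j => P.le j b)).card := by
  apply Finset.card_lt_card
  constructor
  · intro j hj
    simp only [Finset.mem_filter, Finset.mem_univ, true_and] at hj ⊢
    exact P.le_trans _ _ _ hj h.1
  · intro hsub
    have hb : b ∈ Finset.univ.filter (fun j => P.le j b) := by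
      simp [P.le_refl]
    have := hsub hb
    simp only [Finset.mem_filter, Finset.mem_univ, true_and] at this
    exact h.2 (P.le_antisymm _ _ h.1 this)

lemma exists_cover_le (P : FinPoset n) {a b : Fin n} (h : P.lt a b) :
    ∃ c, IsCover P a c ∧ P.le c b := by
  set T := Finset.univ.filter (fun v => P.lt a v ∧ P.le v b) with hT
  have hne : T.Nonempty := ⟨b, by simp [hT, h, P.le_refl]⟩
  obtain ⟨c, hc, hmin⟩ := T.exists_min_image
    (fun v => (Finset.univ.filter (fun j => P.le j v)).card) hne
  simp only [hT, Finset.mem_filter, Finset.mem_univ, true_and] at hc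
  refine ⟨c, ⟨hc.1, ?_⟩, hc.2⟩
  intro z hz1 hz2
  have hzT : z ∈ T := by
    simp only [hT, Finset.mem_filter, Finset.mem_univ, true_and]
    exact ⟨hz1, P.le_trans _ _ _ hz2.1 hc.2⟩
  exact absurd (hmin z hzT) (not_le.2 (card_le_mono P hz2))

lemma exists_le_max (P : FinPoset n) (a : Fin n) : ∃ m, P.le a m ∧ IsMax P m := by
  set T := Finset.univ.filter (fun v => P.le a v) with hT
  have hne : T.Nonempty := ⟨a, by simp [hT, P.le_refl]⟩
  obtain ⟨m, hm, hmax⟩ := T.exists_max_image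
    (fun v => (Finset.univ.filter (fun j => P.le j v)).card) hne
  simp only [hT, Finset.mem_filter, Finset.mem_univ, true_and] at hm
  refine ⟨m, hm, fun b hb => ?_⟩
  have hbT : b ∈ T := by
    simp only [hT, Finset.mem_filter, Finset.mem_univ, true_and]
    exact P.le_trans _ _ _ hm hb.1
  exact absurd (hmax b hbT) (not_le.2 (card_le_mono P hb))

lemma chainAbove (P : FinPoset n) (hP : IsRootedForest P) {a y z : Fin n}
    (h1 : P.le a y) (h2 : P.le a z) : P.le y z ∨ P.le z y := by
  set T := Finset.univ.filter (fun v => P.le a v ∧ P.le v y ∧ P.le v z) with hT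
  have hne : T.Nonempty := ⟨a, by simp [hT, P.le_refl, h1, h2]⟩
  obtain ⟨w, hw, hmax⟩ := T.exists_max_image
    (fun v => (Finset.univ.filter (fun j => P.le j v)).card) hne
  simp only [hT, Finset.mem_filter, Finset.mem_univ, true_and] at hw
  by_cases hwy : w = y
  · exact Or.inl (hwy ▸ hw.2.2)
  by_cases hwz : w = z
  · exact Or.inr (hwz ▸ hw.2.1)
  obtain ⟨c, hc, hcy⟩ := exists_cover_le P ⟨hw.2.1, hwy⟩
  obtain ⟨c', hc', hcz⟩ := exists_cover_le P ⟨hw.2.2, hwz⟩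
  have hcc : c = c' := hP w c c' hc hc'
  subst hcc
  have hcT : c ∈ T := by
    simp only [hT, Finset.mem_filter, Finset.mem_univ, true_and]
    exact ⟨P.le_trans _ _ _ hw.1 hc.1.1, hcy, hcz⟩
  exact absurd (hmax c hcT) (not_le.2 (card_le_mono P hc.1))

lemma max_above_unique (P : FinPoset n) (hP : IsRootedForest P) {a m m' : Fin n}
    (hm : IsMax P m) (hm' : IsMax P m') (h1 : P.le a m) (h2 : P.le a m') : m = m' := by
  rcases chainAbove P hP h1 h2 with h | h
  · by_contra hne; exact hm m' ⟨h, hne⟩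
  · by_contra hne; exact hm' m ⟨h, fun e => hne e.symm⟩

/-- the down-sets of the maximal elements partition the ground set (weighted form). -/
lemma sum_max_downsets (P : FinPoset n) (hP : IsRootedForest P) (x : Fin n → ℝ) :
    ∑ m ∈ Finset.univ.filter (IsMax P),
      ∑ j ∈ Finset.univ.filter (fun j => P.le j m), x j = ∑ j, x j := by
  have h1 : ∀ m, ∑ j ∈ Finset.univ.filter (fun j => P.le j m), x j
      = ∑ j, if P.le j m then x j else 0 := fun m => (Finset.sum_filter _ _)
  simp only [h1]
  rw [Finset.sum_comm]
  refine Finset.sum_congr rfl fun j _ => ?_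
  obtain ⟨m₀, hle, hmax⟩ := exists_le_max P j
  have hm₀ : m₀ ∈ Finset.univ.filter (IsMax P) := by simp [hmax]
  rw [Finset.sum_eq_single m₀]
  · rw [if_pos hle]
  · intro m hm hne
    simp only [Finset.mem_filter, Finset.mem_univ, true_and] at hm
    rw [if_neg]
    intro hjm
    exact hne (max_above_unique P hP hm hmax hjm hle)
  · intro h; exact absurd hm₀ h

def res (P : FinPoset (n + 1)) (m : Fin (n + 1)) : FinPoset n where
  le a b := P.le (m.succAbove a) (m.succAbove b)
  le_refl _ := P.le_refl _
  le_trans _ _ _ := P.le_trans _ _ _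
  le_antisymm _ _ h1 h2 :=
    Fin.succAbove_right_injective (P.le_antisymm _ _ h1 h2)

lemma res_lt_iff (P : FinPoset (n + 1)) (m : Fin (n + 1)) (a b : Fin n) :
    (res P m).lt a b ↔ P.lt (m.succAbove a) (m.succAbove b) := by
  unfold FinPoset.lt res
  simp only
  constructor
  · rintro ⟨h, hne⟩; exact ⟨h, fun e => hne (Fin.succAbove_right_injective e)⟩
  · rintro ⟨h, hne⟩; exact ⟨h, fun e => hne (by rw [e])⟩

lemma res_forest (P : FinPoset (n + 1)) (hP : IsRootedForest P) (m : Fin (n + 1)) :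
    IsRootedForest (res P m) := by
  intro a y z hy hz
  by_contra hne
  have h1 : P.le (m.succAbove a) (m.succAbove y) := hy.1.1
  have h2 : P.le (m.succAbove a) (m.succAbove z) := hz.1.1
  rcases chainAbove P hP h1 h2 with h | h
  · exact hz.2 y hy.1 ((res_lt_iff P m y z).2 ⟨h, fun e =>
      hne (Fin.succAbove_right_injective e)⟩)
  · exact hy.2 z hz.1 ((res_lt_iff P m z y).2 ⟨h, fun e =>
      (hne (Fin.succAbove_right_injective e).symm)⟩)

noncomputable def phi (m : Fin (n + 1)) (σ : Equiv.Perm (Fin n)) :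
    Equiv.Perm (Fin (n + 1)) :=
  Equiv.ofBijective (Fin.lastCases m (fun i => m.succAbove (σ i)))
    (by
      rw [← Finite.injective_iff_bijective]
      intro a b hab
      simp only at hab
      induction a using Fin.lastCases with
      | last =>
        induction b using Fin.lastCases with
        | last => rfl
        | cast j =>
          simp only [Fin.lastCases_last, Fin.lastCases_castSucc] at hab
          exact absurd hab.symm (Fin.succAbove_ne m (σ j))
      | cast i =>
        induction b using Fin.lastCases with
        | last =>
          simp only [Fin.lastCases_last, Fin.lastCases_castSucc] at hab
          exact absurd hab (Fin.succAbove_ne m (σ i))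
        | cast j =>
          simp only [Fin.lastCases_castSucc] at hab
          rw [σ.injective (Fin.succAbove_right_injective hab)])

@[simp] lemma phi_castSucc (m : Fin (n + 1)) (σ : Equiv.Perm (Fin n)) (i : Fin n) :
    phi m σ (i.castSucc) = m.succAbove (σ i) := by
  simp only [phi, Equiv.ofBijective_apply, Fin.lastCases_castSucc]

@[simp] lemma phi_last (m : Fin (n + 1)) (σ : Equiv.Perm (Fin n)) :
    phi m σ (Fin.last n) = m := by
  simp only [phi, Equiv.ofBijective_apply, Fin.lastCases_last]

@[simp] lemma phi_symm_m (m : Fin (n + 1)) (σ : Equiv.Perm (Fin n)) :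
    (phi m σ).symm m = Fin.last n := by
  rw [Equiv.symm_apply_eq, phi_last]

@[simp] lemma phi_symm_succAbove (m : Fin (n + 1)) (σ : Equiv.Perm (Fin n)) (a : Fin n) :
    (phi m σ).symm (m.succAbove a) = (σ.symm a).castSucc := by
  rw [Equiv.symm_apply_eq, phi_castSucc, Equiv.apply_symm_apply]

lemma exists_phi (π : Equiv.Perm (Fin (n + 1))) :
    ∃ σ : Equiv.Perm (Fin n), phi (π (Fin.last n)) σ = π := by
  set m := π (Fin.last n) with hm
  have hne : ∀ i : Fin n, π i.castSucc ≠ m := fun i e =>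
    (Fin.castSucc_lt_last i).ne (π.injective e)
  have hd : ∀ i : Fin n, ∃ z : Fin n, m.succAbove z = π i.castSucc := fun i =>
    Fin.exists_succAbove_eq (hne i)
  choose d hdspec using hd
  have hdinj : Function.Injective d := by
    intro i j hij
    have : π i.castSucc = π j.castSucc := by rw [← hdspec i, ← hdspec j, hij]
    exact Fin.castSucc_injective n (π.injective this)
  refine ⟨Equiv.ofBijective d ((Finite.injective_iff_bijective).1 hdinj), ?_⟩
  refine Equiv.ext fun a => ?_
  induction a using Fin.lastCases with
  | last => rw [phi_last]
  | cast i =>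
    rw [phi_castSucc]
    show m.succAbove (d i) = _
    exact hdspec i

lemma linext_phi_iff (P : FinPoset (n + 1)) (m : Fin (n + 1)) (σ : Equiv.Perm (Fin n)) :
    IsLinearExtension P (phi m σ) ↔ IsMax P m ∧ IsLinearExtension (res P m) σ := by
  constructor
  · intro h
    constructor
    · intro b hb
      have := h m b hb
      rw [phi_symm_m] at this
      exact absurd this (Fin.le_last _).not_gt
    · intro a b hab
      rw [res_lt_iff] at hab
      have := h _ _ hab
      rwa [phi_symm_succAbove, phi_symm_succAbove, Fin.castSucc_lt_castSucc_iff] at this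
  · rintro ⟨hmax, hσ⟩ a b hab
    by_cases hbm : b = m
    · subst hbm
      obtain ⟨a', rfl⟩ := Fin.exists_succAbove_eq hab.2
      rw [phi_symm_succAbove, phi_symm_m]
      exact Fin.castSucc_lt_last _
    by_cases ham : a = m
    · subst ham
      exact absurd hab (hmax b)
    obtain ⟨a', rfl⟩ := Fin.exists_succAbove_eq ham
    obtain ⟨b', rfl⟩ := Fin.exists_succAbove_eq hbm
    rw [phi_symm_succAbove, phi_symm_succAbove, Fin.castSucc_lt_castSucc_iff]
    exact hσ a' b' ((res_lt_iff P m a' b').2 hab)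

lemma Iic_last_eq : (Finset.Iic (Fin.last n)) = Finset.univ := by
  ext b; simp [Fin.le_last]

lemma Iic_castSucc_map (j : Fin n) :
    Finset.Iic j.castSucc = (Finset.Iic j).map Fin.castSuccEmb := by
  ext b
  simp only [Finset.mem_map, Finset.mem_Iic]
  constructor
  · intro hb
    have hblast : b ≠ Fin.last n := (lt_of_le_of_lt hb (Fin.castSucc_lt_last j)).ne
    obtain ⟨k, hk⟩ := Fin.exists_castSucc_eq.2 hblast
    refine ⟨k, ?_, hk⟩
    rw [← Fin.castSucc_le_castSucc_iff, hk]; exact hb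
  · rintro ⟨k, hk, rfl⟩
    show Fin.castSucc k ≤ _
    rw [Fin.castSucc_le_castSucc_iff]; exact hk

lemma weight_phi (m : Fin (n + 1)) (σ : Equiv.Perm (Fin n)) (x : Fin (n + 1) → ℝ) :
    ∏ i : Fin (n + 1), (∑ k ∈ Finset.Iic i, x (phi m σ k))⁻¹
      = (∑ j, x j)⁻¹ * ∏ i : Fin n, (∑ k ∈ Finset.Iic i, x (m.succAbove (σ k)))⁻¹ := by
  rw [Fin.prod_univ_castSucc]
  have hlast : ∑ k ∈ Finset.Iic (Fin.last n), x (phi m σ k) = ∑ j, x j := by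
    rw [Iic_last_eq]
    exact Equiv.sum_comp (phi m σ) x
  rw [hlast, mul_comm]
  congr 1
  refine Finset.prod_congr rfl fun i _ => ?_
  congr 1
  rw [Iic_castSucc_map, Finset.sum_map]
  refine Finset.sum_congr rfl fun k _ => ?_
  show x (phi m σ (Fin.castSucc k)) = _
  rw [phi_castSucc]

lemma key : ∀ (n : ℕ) (P : FinPoset n), IsRootedForest P → ∀ x : Fin n → ℝ, (∀ i, 0 < x i) →
    ∑ π ∈ Finset.univ.filter (fun π : Equiv.Perm (Fin n) => IsLinearExtension P π),
      ∏ i : Fin n, (∑ k ∈ Finset.Iic i, x (π k))⁻¹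
    = ∏ i : Fin n, (∑ j ∈ Finset.univ.filter (fun j => P.le j i), x j)⁻¹ := by
  intro n
  induction n with
  | zero =>
    intro P hP x hx
    have h1 : ∀ π : Equiv.Perm (Fin 0), IsLinearExtension P π := fun π a => a.elim0
    rw [Finset.filter_true_of_mem (fun π _ => h1 π)]
    simp
  | succ n IH =>
    intro P hP x hx
    set D : Fin (n + 1) → ℝ := fun i => ∑ j ∈ Finset.univ.filter (fun j => P.le j i), x j
      with hD
    have hDpos : ∀ i, 0 < D i := by
      intro i
      refine Finset.sum_pos (fun j _ => hx j) ⟨i, ?_⟩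
      simp [P.le_refl]
    have hXpos : (0:ℝ) < ∑ j, x j := Finset.sum_pos (fun j _ => hx j) ⟨0, Finset.mem_univ 0⟩
    -- step 1 : reindex the sum by (m, σ)
    have step1 :
        ∑ π ∈ Finset.univ.filter
            (fun π : Equiv.Perm (Fin (n+1)) => IsLinearExtension P π),
          ∏ i : Fin (n+1), (∑ k ∈ Finset.Iic i, x (π k))⁻¹
        = ∑ p ∈ (Finset.univ.filter (IsMax P)).sigma
              (fun m => Finset.univ.filter
                (fun σ : Equiv.Perm (Fin n) => IsLinearExtension (res P m) σ)),
            (∑ j, x j)⁻¹ *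
              ∏ i : Fin n, (∑ k ∈ Finset.Iic i, x (p.1.succAbove (p.2 k)))⁻¹ := by
      refine (Finset.sum_bij (fun p _ => phi p.1 p.2) ?_ ?_ ?_ ?_).symm
      · rintro ⟨m, σ⟩ hp
        rw [Finset.mem_sigma] at hp
        simp only [Finset.mem_filter, Finset.mem_univ, true_and] at hp ⊢
        exact (linext_phi_iff P m σ).2 ⟨hp.1, hp.2⟩
      · rintro ⟨m, σ⟩ hp ⟨m', σ'⟩ hp' h
        have hm : m = m' := by
          have := congrArg (fun π : Equiv.Perm (Fin (n+1)) => π (Fin.last n)) h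
          simpa using this
        subst hm
        have hσ : σ = σ' := by
          refine Equiv.ext fun i => ?_
          have := congrArg (fun π : Equiv.Perm (Fin (n+1)) => π i.castSucc) h
          simp only [phi_castSucc] at this
          exact Fin.succAbove_right_injective this
        subst hσ
        rfl
      · intro π hπ
        simp only [Finset.mem_filter, Finset.mem_univ, true_and] at hπ
        obtain ⟨σ, hσ⟩ := exists_phi π
        have h2 : IsMax P (π (Fin.last n)) ∧ IsLinearExtension (res P (π (Fin.last n))) σ := by
          rw [← linext_phi_iff, hσ]; exact hπ
        refine ⟨⟨π (Fin.last n), σ⟩, ?_, hσ⟩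
        rw [Finset.mem_sigma]
        simp only [Finset.mem_filter, Finset.mem_univ, true_and]
        exact h2
      · rintro ⟨m, σ⟩ hp
        exact (weight_phi m σ x).symm
    rw [step1, Finset.sum_sigma]
    -- step 2 : evaluate the inner sums via the induction hypothesis
    have step2 : ∀ m ∈ Finset.univ.filter (IsMax P),
        ∑ σ ∈ Finset.univ.filter
            (fun σ : Equiv.Perm (Fin n) => IsLinearExtension (res P m) σ),
          (∑ j, x j)⁻¹ * ∏ i : Fin n, (∑ k ∈ Finset.Iic i, x (m.succAbove (σ k)))⁻¹
        = (∑ j, x j)⁻¹ * (D m * ∏ i : Fin (n+1), (D i)⁻¹) := by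
      intro m hm
      simp only [Finset.mem_filter, Finset.mem_univ, true_and] at hm
      rw [← Finset.mul_sum]
      congr 1
      rw [IH (res P m) (res_forest P hP m) (fun j => x (m.succAbove j))
        (fun j => hx _)]
      have hflt : ∀ i : Fin n,
          ∑ j ∈ Finset.univ.filter (fun j => (res P m).le j i), x (m.succAbove j)
            = D (m.succAbove i) := by
        intro i
        have hmle : ¬ P.le m (m.succAbove i) := by
          intro hle
          exact hm (m.succAbove i) ⟨hle, (Fin.ne_succAbove m i)⟩
        show _ = ∑ j ∈ Finset.univ.filter (fun j => P.le j (m.succAbove i)), x j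
        rw [Finset.sum_filter, Finset.sum_filter,
          Fin.sum_univ_succAbove (fun j => if P.le j (m.succAbove i) then x j else 0) m,
          if_neg hmle, zero_add]
        rfl
      rw [Finset.prod_congr rfl fun i _ => by rw [hflt i]]
      have := Fin.prod_univ_succAbove (fun i => (D i)⁻¹) m
      rw [this, ← mul_assoc, mul_inv_cancel₀ (hDpos m).ne', one_mul]
    rw [Finset.sum_congr rfl step2]
    have step3 : ∑ m ∈ Finset.univ.filter (IsMax P), D m = ∑ j, x j :=
      sum_max_downsets P hP x
    have hre : ∀ m, (∑ j, x j)⁻¹ * (D m * ∏ i : Fin (n+1), (D i)⁻¹)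
        = D m * ((∑ j, x j)⁻¹ * ∏ i : Fin (n+1), (D i)⁻¹) := fun m => by ring
    rw [Finset.sum_congr rfl fun m _ => hre m, ← Finset.sum_mul, step3,
      ← mul_assoc, mul_inv_cancel₀ hXpos.ne', one_mul]

end Aux

/-- For a rooted forest `P`, the weights `Z_P · w(π)` of the promotion Markov chain sum
to `1` over all linear extensions, where
`w(π) = ∏_i (x_1 + ⋯ + x_i)/(x_{π_1} + ⋯ + x_{π_i})` and
`Z_P = ∏_i x_{≼ i} / (x_1 + ⋯ + x_i)` with `x_{≼ i} = Σ_{j ≼ i} x_j`. -/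


theorem partition_function_rooted_forest (P : FinPoset n) (hP : IsRootedForest P)
    (x : Fin n → ℝ) (hx : ∀ i, 0 < x i) :
    ∑ π ∈ Finset.univ.filter (fun π : Equiv.Perm (Fin n) => IsLinearExtension P π),
      (∏ i : Fin n, (∑ j ∈ Finset.univ.filter (fun j => P.le j i), x j) /
          (∑ k ∈ Finset.Iic i, x k)) *
        (∏ i : Fin n, (∑ k ∈ Finset.Iic i, x k) / (∑ k ∈ Finset.Iic i, x (π k))) = 1 := by
  have hS : ∀ i : Fin n, (0:ℝ) < ∑ k ∈ Finset.Iic i, x k :=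
    fun i => Finset.sum_pos (fun k _ => hx k) ⟨i, Finset.mem_Iic.2 le_rfl⟩
  have hD : ∀ i : Fin n, (0:ℝ) < ∑ j ∈ Finset.univ.filter (fun j => P.le j i), x j :=
    fun i => Finset.sum_pos (fun j _ => hx j) ⟨i, by simp [P.le_refl]⟩
  have hterm : ∀ π : Equiv.Perm (Fin n),
      (∏ i : Fin n, (∑ j ∈ Finset.univ.filter (fun j => P.le j i), x j) /
          (∑ k ∈ Finset.Iic i, x k)) *
        (∏ i : Fin n, (∑ k ∈ Finset.Iic i, x k) / (∑ k ∈ Finset.Iic i, x (π k)))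
      = (∏ i : Fin n, (∑ j ∈ Finset.univ.filter (fun j => P.le j i), x j)) *
          ∏ i : Fin n, (∑ k ∈ Finset.Iic i, x (π k))⁻¹ := by
    intro π
    rw [← Finset.prod_mul_distrib, ← Finset.prod_mul_distrib]
    refine Finset.prod_congr rfl fun i _ => ?_
    rw [div_mul_div_comm, mul_comm (∑ j ∈ Finset.univ.filter (fun j => P.le j i), x j),
      mul_div_mul_left _ _ (hS i).ne', div_eq_mul_inv]
  rw [Finset.sum_congr rfl fun π _ => hterm π, ← Finset.mul_sum, Aux.key n P hP x hx,
    ← Finset.prod_mul_distrib,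
    Finset.prod_congr rfl fun i _ => mul_inv_cancel₀ (hD i).ne', Finset.prod_const_one]
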